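/- For integers N ≥ 0, define polynomials p_N(z) = Σ_{i=0}^{⌊(N+1)/2⌋} C(N+1, 2i) z^i and q_N(z) = Σ_{i=0}^{⌊N/2⌋} C(N+1, 2i+1) z^i. Then as an identity of rational functions in variables z₁, z₂: 1/(1 - z₂/z₁²) = Σ_{r=0}^{N} (Σ_s d_{r,s} (1-z₂)^s) (1-z₁)^r - ((1-z₁)/(1-z₂))^{N+1} · (z₁ q_N(z₂) + p_N(z₂))/(1 - z₁²/z₂), where d_{r,s} are the coefficients of the Laurent expansion of (1-2x₁+x₁²)/(x₂-2x₁+x₁²) (with x_i = 1-z_i) in |x₁| < |x₂|, and the inner sum over s is finite (s ranges from -r-1 to -⌊r/2⌋). -/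

import Mathlib

open Finset

/-- Binomial coefficient with integer arguments, zero outside `0 ≤ k ≤ n`. -/
noncomputable def Cb (n k : ℤ) : ℚ :=
  if 0 ≤ k ∧ k ≤ n then (n.toNat.choose k.toNat : ℚ) else 0

/-- Coefficient of `x₁^r x₂^s` in the Laurent expansion of `1/(x₂ - 2x₁ + x₁²)`
valid for `|x₁| < |x₂|`:  `e_{r,-k} = (-1)^{r-k+1} 2^{2k-2-r} C(k-1, 2k-2-r)`. -/
noncomputable def eCoef (r s : ℤ) : ℚ :=
  (-1 : ℚ) ^ (r + s + 1) * (2 : ℚ) ^ (-2 * s - 2 - r) * Cb (-s - 1) (-2 * s - 2 - r)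

/-- Coefficient of `x₁^r x₂^s` in the Laurent expansion of
`(1 - 2x₁ + x₁²)/(x₂ - 2x₁ + x₁²)` valid for `|x₁| < |x₂|`. -/
noncomputable def dCoef (r s : ℤ) : ℚ :=
  eCoef r s - 2 * eCoef (r - 1) s + eCoef (r - 2) s

/-- `p_N(z) = Σ_{i=0}^{⌊(N+1)/2⌋} C(N+1, 2i) z^i`. -/
noncomputable def pPoly (N : ℕ) (z : ℂ) : ℂ :=
  ∑ i ∈ Finset.range ((N + 1) / 2 + 1), ((N + 1).choose (2 * i) : ℂ) * z ^ i

/-- `q_N(z) = Σ_{i=0}^{⌊N/2⌋} C(N+1, 2i+1) z^i`. -/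
noncomputable def qPoly (N : ℕ) (z : ℂ) : ℂ :=
  ∑ i ∈ Finset.range (N / 2 + 1), ((N + 1).choose (2 * i + 1) : ℂ) * z ^ i

lemma cb_pascal (n k : ℤ) :
    Cb n k = Cb (n-1) (k-1) + Cb (n-1) k + (if n = 0 ∧ k = 0 then 1 else 0) := by
  unfold Cb
  by_cases h0 : 0 ≤ k ∧ k ≤ n
  · obtain ⟨hk, hkn⟩ := h0
    by_cases hk0 : k = 0
    · subst hk0
      by_cases hn0 : n = 0
      · subst hn0; norm_num
      · rw [if_pos ⟨hk, hkn⟩, if_neg (by omega), if_pos (by omega), if_neg (by omega)]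
        norm_num
    · by_cases hkn' : k = n
      · rw [if_pos ⟨hk, hkn⟩, if_pos (by omega), if_neg (by omega), if_neg (by omega)]
        subst hkn'
        rw [Nat.choose_self, Nat.choose_self]
        norm_num
      · rw [if_pos ⟨hk, hkn⟩, if_pos (by omega), if_pos (by omega), if_neg (by omega)]
        have h1 : n.toNat = (n-1).toNat + 1 := by omega
        have h2 : k.toNat = (k-1).toNat + 1 := by omega
        rw [h1, h2, Nat.choose_succ_succ]
        push_cast; ring
  · rw [if_neg h0, if_neg (by omega), if_neg (by omega), if_neg (by omega)]
    norm_num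

lemma eRec (r s : ℤ) :
    eCoef r (s-1) = 2 * eCoef (r-1) s - eCoef (r-2) s + (if r = 0 ∧ s = 0 then 1 else 0) := by
  unfold eCoef
  simp only [show r+(s-1)+1 = r+s by ring, show -2*(s-1)-2-r = -2*s-r by ring,
    show -(s-1)-1 = -s by ring, show r-1+s+1 = r+s by ring,
    show -2*s-2-(r-1) = -2*s-r-1 by ring, show r-2+s+1 = r+s-1 by ring,
    show -2*s-2-(r-2) = -2*s-r by ring]
  rw [cb_pascal (-s) (-2*s-r)]
  by_cases hc : r = 0 ∧ s = 0
  · obtain ⟨rfl, rfl⟩ := hc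
    norm_num [Cb]
  · rw [if_neg (by omega : ¬((-s:ℤ) = 0 ∧ -2*s-r = 0)), if_neg hc]
    have h2 : (2:ℚ)^(-2*s-r-1) = (2:ℚ)^(-2*s-r) * 2⁻¹ := by
      rw [zpow_sub_one₀ (by norm_num : (2:ℚ) ≠ 0)]
    have hs : (-1:ℚ)^(r+s-1) = -((-1:ℚ)^(r+s)) := by
      rw [zpow_sub_one₀ (by norm_num : (-1:ℚ) ≠ 0)]; norm_num
    rw [h2, hs]
    ring

lemma eZero (r s : ℤ) (h : ¬(0 ≤ -2*s-2-r ∧ -2*s-2-r ≤ -s-1)) : eCoef r s = 0 := by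
  unfold eCoef Cb
  rw [if_neg (by omega)]
  ring

lemma dZero (r s : ℤ) (h : s < -r-1 ∨ -r < 2*s) : dCoef r s = 0 := by
  unfold dCoef
  rw [eZero r s (by omega), eZero (r-1) s (by omega), eZero (r-2) s (by omega)]
  ring

lemma dZeroTop (r : ℤ) : dCoef r 0 = 0 := by
  unfold dCoef
  rw [eZero r 0 (by omega), eZero (r-1) 0 (by omega), eZero (r-2) 0 (by omega)]
  ring

lemma dRec (r s : ℤ) (hr : 3 ≤ r) : dCoef r (s-1) = 2 * dCoef (r-1) s - dCoef (r-2) s := by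
  unfold dCoef
  rw [eRec r s, eRec (r-1) s, eRec (r-2) s]
  rw [if_neg (by omega : ¬(r = 0 ∧ s = 0)), if_neg (by omega : ¬(r-1 = 0 ∧ s = 0)),
    if_neg (by omega : ¬(r-2 = 0 ∧ s = 0))]
  simp only [show r-1-1 = r-2 by ring, show r-1-2 = r-3 by ring, show r-2-1 = r-3 by ring,
    show r-2-2 = r-4 by ring]
  ring

lemma qExt (N K : ℕ) (h : N/2+1 ≤ K) (z : ℂ) :
    qPoly N z = ∑ i ∈ Finset.range K, ((N + 1).choose (2 * i + 1) : ℂ) * z ^ i := by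
  unfold qPoly
  apply Finset.sum_subset (Finset.range_subset_range.2 h)
  intro i _ hi
  rw [Finset.mem_range, not_lt] at hi
  rw [Nat.choose_eq_zero_of_lt (by omega)]
  norm_num

lemma pExt (N K : ℕ) (h : (N+1)/2+1 ≤ K) (z : ℂ) :
    pPoly N z = ∑ i ∈ Finset.range K, ((N + 1).choose (2 * i) : ℂ) * z ^ i := by
  unfold pPoly
  apply Finset.sum_subset (Finset.range_subset_range.2 h)
  intro i _ hi
  rw [Finset.mem_range, not_lt] at hi
  rw [Nat.choose_eq_zero_of_lt (by omega)]
  norm_num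

lemma lemB (N : ℕ) (z : ℂ) : qPoly (N+1) z = qPoly N z + pPoly N z := by
  rw [qExt (N+1) ((N+1)/2+1) (le_refl _) z, qExt N ((N+1)/2+1) (by omega) z,
    pExt N ((N+1)/2+1) (le_refl _) z, ← Finset.sum_add_distrib]
  apply Finset.sum_congr rfl
  intro i _
  rw [show (N+1+1).choose (2*i+1) = (N+1).choose (2*i) + (N+1).choose (2*i+1) from
    Nat.choose_succ_succ (N+1) (2*i)]
  push_cast; ring

lemma lemA (N : ℕ) (z : ℂ) : pPoly (N+1) z = pPoly N z + z * qPoly N z := by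
  have hq : z * qPoly N z =
      ∑ i ∈ Finset.range (N/2+2),
        (if i = 0 then 0 else ((N + 1).choose (2 * i - 1) : ℂ) * z ^ i) := by
    rw [Finset.sum_range_succ' (fun i => (if i = 0 then 0 else ((N + 1).choose (2 * i - 1) : ℂ) * z ^ i)) (N/2+1)]
    norm_num
    rw [qPoly, Finset.mul_sum]
    apply Finset.sum_congr rfl
    intro i _
    rw [show 2*(i+1)-1 = 2*i+1 by omega]
    ring
  rw [hq, pExt (N+1) (N/2+2) (by omega) z, pExt N (N/2+2) (by omega) z,
    ← Finset.sum_add_distrib]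
  apply Finset.sum_congr rfl
  intro i _
  rcases Nat.eq_zero_or_pos i with rfl | hi
  · norm_num
  · rw [if_neg (by omega)]
    rw [show (N+1+1).choose (2*i) = (N+1).choose (2*i-1) + (N+1).choose (2*i) by
      rw [show 2*i = (2*i-1)+1 by omega]; rw [Nat.choose_succ_succ (N+1) (2*i-1)]
      congr 1]
    push_cast; ring

noncomputable def Ssum (m : ℕ) (z : ℂ) : ℂ :=
  ∑ s ∈ Finset.Icc (-(m:ℤ)-1) (-1), (dCoef m s : ℂ) * (1-z)^s

lemma qRec (m : ℕ) (z : ℂ) :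
    qPoly (m+2) z = 2 * qPoly (m+1) z - (1-z) * qPoly m z := by
  linear_combination lemB (m+1) z + lemA m z - lemB m z

lemma Ssum_ext (m : ℕ) (M : ℤ) (hM : M ≤ -(m:ℤ)-1) (z : ℂ) :
    ∑ t ∈ Finset.Icc M 0, (dCoef m t : ℂ) * (1-z)^t = Ssum m z := by
  rw [Ssum]
  refine (Finset.sum_subset ?_ ?_).symm
  · intro t ht; simp only [Finset.mem_Icc] at *; omega
  · intro t ht hnt
    simp only [Finset.mem_Icc] at ht hnt
    have h0 : dCoef m t = 0 := by
      rcases (by omega : t = 0 ∨ t < -(m:ℤ)-1) with rfl | h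
      · exact dZeroTop _
      · exact dZero _ _ (Or.inl (by omega))
    rw [h0]
    norm_num

lemma keyStep (m : ℕ) (z : ℂ) (hz : (1:ℂ) - z ≠ 0) :
    (1-z) * Ssum (m+3) z = 2 * Ssum (m+2) z - Ssum (m+1) z := by
  have h1 : (1-z) * Ssum (m+3) z
      = ∑ t ∈ Finset.Icc (-(m:ℤ)-3) 0, (dCoef ((m:ℤ)+3) (t-1) : ℂ) * (1-z)^t := by
    rw [Ssum, Finset.mul_sum]
    apply Finset.sum_nbij' (fun s => s+1) (fun t => t-1)
    · intro a ha; simp only [Finset.mem_Icc] at *; push_cast at ha; omega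
    · intro a ha; simp only [Finset.mem_Icc] at *; push_cast; omega
    · intro a _; ring
    · intro a _; ring
    · intro a _
      push_cast
      rw [show a+1-1 = a by ring, zpow_add_one₀ hz a]
      ring
  have h2 : ∀ t ∈ Finset.Icc (-(m:ℤ)-3) 0, (dCoef ((m:ℤ)+3) (t-1) : ℂ) * (1-z)^t
      = 2 * ((dCoef ((m:ℤ)+2) t : ℂ) * (1-z)^t) - (dCoef ((m:ℤ)+1) t : ℂ) * (1-z)^t := by
    intro t _
    rw [dRec ((m:ℤ)+3) t (by omega), show (m:ℤ)+3-1 = (m:ℤ)+2 by ring,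
      show (m:ℤ)+3-2 = (m:ℤ)+1 by ring]
    push_cast
    ring
  rw [h1, Finset.sum_congr rfl h2, Finset.sum_sub_distrib, ← Finset.mul_sum]
  have hA := Ssum_ext (m+2) (-(m:ℤ)-3) (by push_cast; omega) z
  have hB := Ssum_ext (m+1) (-(m:ℤ)-3) (by push_cast; omega) z
  push_cast at hA hB
  rw [hA, hB]

lemma zpow_cancel (w : ℂ) (hw : w ≠ 0) (n : ℕ) (k : ℤ) :
    w^n * w^k = w^((n:ℤ)+k) := by
  rw [← zpow_natCast w n, ← zpow_add₀ hw]

lemma base1 (z : ℂ) (hz : (1:ℂ) - z ≠ 0) :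
    (1-z)^(0+2) * Ssum (0+1) z = z * qPoly (0+1) z := by
  have e1 : Ssum 1 z = (dCoef 1 (-2) : ℂ) * (1-z)^(-2:ℤ) + (dCoef 1 (-1) : ℂ) * (1-z)^(-1:ℤ) := by
    rw [Ssum, show (-((1:ℕ):ℤ)-1) = -2 by norm_num,
      show Finset.Icc (-2:ℤ) (-1) = {-2,-1} by decide,
      Finset.sum_pair (by norm_num : (-2:ℤ) ≠ -1)]
    norm_num
  rw [show (0+1 : ℕ) = 1 by rfl, e1,
    show dCoef 1 (-2) = 2 by norm_num [dCoef, eCoef, Cb],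
    show dCoef 1 (-1) = -2 by norm_num [dCoef, eCoef, Cb],
    show qPoly 1 z = 2 by norm_num [qPoly]]
  have A : (1-z)^(0+2:ℕ) * (1-z)^(-2:ℤ) = 1 := by
    rw [zpow_cancel _ hz]; norm_num
  have B : (1-z)^(0+2:ℕ) * (1-z)^(-1:ℤ) = 1-z := by
    rw [zpow_cancel _ hz]; norm_num
  push_cast
  linear_combination (2:ℂ) * A - 2 * B

lemma base2 (z : ℂ) (hz : (1:ℂ) - z ≠ 0) :
    (1-z)^(0+3) * Ssum (0+2) z = z * qPoly (0+2) z := by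
  have e1 : Ssum 2 z = (dCoef 2 (-3) : ℂ) * (1-z)^(-3:ℤ) + (dCoef 2 (-2) : ℂ) * (1-z)^(-2:ℤ)
      + (dCoef 2 (-1) : ℂ) * (1-z)^(-1:ℤ) := by
    rw [Ssum, show (-((2:ℕ):ℤ)-1) = -3 by norm_num,
      show Finset.Icc (-3:ℤ) (-1) = {-3,-2,-1} by decide]
    rw [show ({-3,-2,-1} : Finset ℤ) = insert (-3) {-2,-1} by rfl,
      Finset.sum_insert (by norm_num), Finset.sum_pair (by norm_num : (-2:ℤ) ≠ -1)]
    push_cast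
    ring
  rw [show (0+2 : ℕ) = 2 by rfl, e1,
    show dCoef 2 (-3) = 4 by norm_num [dCoef, eCoef, Cb],
    show dCoef 2 (-2) = -5 by norm_num [dCoef, eCoef, Cb],
    show dCoef 2 (-1) = 1 by norm_num [dCoef, eCoef, Cb],
    show qPoly 2 z = 3 + z by norm_num [qPoly, Finset.sum_range_succ]]
  have A : (1-z)^(0+3:ℕ) * (1-z)^(-3:ℤ) = 1 := by
    rw [zpow_cancel _ hz]; norm_num
  have B : (1-z)^(0+3:ℕ) * (1-z)^(-2:ℤ) = 1-z := by
    rw [zpow_cancel _ hz]; norm_num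
  have C : (1-z)^(0+3:ℕ) * (1-z)^(-1:ℤ) = (1-z)^(2:ℤ) := by
    rw [zpow_cancel _ hz]; norm_num
  push_cast
  have C2 : ((1-z):ℂ)^(2:ℤ) = (1-z)*(1-z) := by
    rw [zpow_two]
  linear_combination (4:ℂ) * A - 5 * B + C + C2

lemma key (z : ℂ) (hz : (1:ℂ) - z ≠ 0) (m : ℕ) :
    (1-z)^(m+2) * Ssum (m+1) z = z * qPoly (m+1) z := by
  have H : ∀ n : ℕ, ((1-z)^(n+2) * Ssum (n+1) z = z * qPoly (n+1) z) ∧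
      ((1-z)^(n+3) * Ssum (n+2) z = z * qPoly (n+2) z) := by
    intro n
    induction n with
    | zero => exact ⟨base1 z hz, base2 z hz⟩
    | succ k ih =>
      refine ⟨ih.2, ?_⟩
      have hs := keyStep k z hz
      have hq : qPoly (k+3) z = 2 * qPoly (k+2) z - (1-z) * qPoly (k+1) z := qRec (k+1) z
      have : (1-z)^(k+4) * Ssum (k+3) z = z * qPoly (k+3) z := by
        calc (1-z)^(k+4) * Ssum (k+3) z
            = (1-z)^(k+3) * ((1-z) * Ssum (k+3) z) := by ring
          _ = (1-z)^(k+3) * (2 * Ssum (k+2) z - Ssum (k+1) z) := by rw [hs]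
          _ = 2 * ((1-z)^(k+3) * Ssum (k+2) z) - (1-z) * ((1-z)^(k+2) * Ssum (k+1) z) := by
              ring
          _ = 2 * (z * qPoly (k+2) z) - (1-z) * (z * qPoly (k+1) z) := by rw [ih.1, ih.2]
          _ = z * qPoly (k+3) z := by rw [hq]; ring
      exact this
  exact (H m).1

lemma inner_eq (r : ℕ) (z : ℂ) :
    ∑ s ∈ Finset.Icc (-(r:ℤ)-1) (-((r:ℤ)/2)), (dCoef r s : ℂ) * (1-z)^s = Ssum r z := by
  rw [← Ssum_ext r (-(r:ℤ)-1) le_rfl z]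
  apply Finset.sum_subset
  · intro t ht; simp only [Finset.mem_Icc] at *; omega
  · intro t ht hnt
    simp only [Finset.mem_Icc] at ht hnt
    have h0 : dCoef r t = 0 := by
      rcases (by omega : t = 0 ∨ (-(r:ℤ) < 2*t)) with rfl | h
      · exact dZeroTop _
      · exact dZero _ _ (Or.inr h)
    rw [h0]; norm_num

/-- Truncation of the expansion of `1/(1-z₂/z₁²)` in powers of `(1-z₁)`, `(1-z₂)`
with explicit remainder term. -/
theorem stmt5 (N : ℕ) (z₁ z₂ : ℂ) (h1 : z₁ ≠ 0) (h2 : z₂ ≠ 0) (h3 : z₁ ≠ 1)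
    (h4 : z₂ ≠ 1) (h5 : z₁ ^ 2 ≠ z₂) :
    (1 - z₂ / z₁ ^ 2)⁻¹ =
      ∑ r ∈ Finset.range (N + 1),
        (∑ s ∈ Finset.Icc (-(r : ℤ) - 1) (-((r : ℤ) / 2)), (dCoef r s : ℂ) * (1 - z₂) ^ s)
          * (1 - z₁) ^ r
      - ((1 - z₁) / (1 - z₂)) ^ (N + 1) * (z₁ * qPoly N z₂ + pPoly N z₂)
          / (1 - z₁ ^ 2 / z₂) := by
  have hx1 : (1:ℂ) - z₁ ≠ 0 := sub_ne_zero.mpr (Ne.symm h3)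
  have hx2 : (1:ℂ) - z₂ ≠ 0 := sub_ne_zero.mpr (Ne.symm h4)
  have hz12 : z₁^2 - z₂ ≠ 0 := sub_ne_zero.mpr h5
  have hD : (1:ℂ) - z₁^2/z₂ ≠ 0 := by
    rw [sub_ne_zero]
    intro h
    apply h5
    field_simp at h
    exact h.symm
  have hL : (1:ℂ) - z₂/z₁^2 ≠ 0 := by
    rw [sub_ne_zero]
    intro h
    apply h5
    field_simp at h
    exact h
  induction N with
  | zero =>
    rw [Finset.sum_range_one]
    have hI : ∑ s ∈ Finset.Icc (-((0:ℕ):ℤ) - 1) (-(((0:ℕ):ℤ) / 2)), (dCoef ((0:ℕ):ℤ) s : ℂ) * (1 - z₂) ^ s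
        = (1-z₂)^(-1:ℤ) := by
      rw [show (-((0:ℕ):ℤ)-1) = -1 by norm_num, show (-(((0:ℕ):ℤ)/2)) = 0 by norm_num,
        show Finset.Icc (-1:ℤ) 0 = {-1, 0} by decide,
        Finset.sum_pair (by norm_num : (-1:ℤ) ≠ 0)]
      norm_num [show dCoef 0 (-1) = 1 by norm_num [dCoef, eCoef, Cb],
        show dCoef 0 0 = 0 by norm_num [dCoef, eCoef, Cb]]
    rw [hI, show qPoly 0 z₂ = 1 by norm_num [qPoly], show pPoly 0 z₂ = 1 by norm_num [pPoly]]
    rw [zpow_neg_one]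
    rw [show (1:ℂ) - z₂/z₁^2 = (z₁^2 - z₂)/z₁^2 by field_simp,
      show (1:ℂ) - z₁^2/z₂ = (z₂ - z₁^2)/z₂ by field_simp]
    have hz21 : z₂ - z₁^2 ≠ 0 := fun h => h5 (by linear_combination -h)
    simp only [zero_add, pow_one]
    field_simp
    ring
  | succ M ih =>
    rw [Finset.sum_range_succ, ih]
    have hkey := key z₂ hx2 M
    have hin := inner_eq (M+1) z₂
    rw [hin]
    have hQ : qPoly (M+1) z₂ = qPoly M z₂ + pPoly M z₂ := lemB M z₂
    have hP : pPoly (M+1) z₂ = pPoly M z₂ + z₂ * qPoly M z₂ := lemA M z₂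
    have hS : Ssum (M+1) z₂ = z₂ * (qPoly M z₂ + pPoly M z₂) / (1-z₂)^(M+2) := by
      rw [eq_div_iff (pow_ne_zero _ hx2), ← hQ, mul_comm]
      linear_combination hkey
    rw [hS, hQ, hP, show (1:ℂ) - z₁^2/z₂ = (z₂ - z₁^2)/z₂ by field_simp]
    have hz21 : z₂ - z₁^2 ≠ 0 := fun h => h5 (by linear_combination -h)
    rw [div_pow, div_pow]
    field_simp
    ring
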